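/- Let α, μ, γ̄ > 0, let f_{γ̄} be the α-μ SNR density, let ω, ρ, τ > 0, and let 0 < γ_th < ω/ρ. If X is a random variable with density f_{γ̄} and Y = ω·X/(ρ·X + τ) is the impaired SINR, then the outage probability satisfies P(Y ≤ γ_th) = (1/Γ(μ)) · ∫₀^{μ·(τ·γ_th/((ω − ρ·γ_th)·γ̄))^{α/2}} t^{μ−1}·e^{−t} dt. -/

import Mathlib

open Real MeasureTheory intervalIntegral
open Set

/-- The α-μ SNR probability density function. -/
noncomputable def alphaMuDensity (α μ γbar γ : ℝ) : ℝ :=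
  if γ ≤ 0 then 0
  else (α * μ ^ μ) / (2 * Real.Gamma μ * γbar ^ (α * μ / 2)) * γ ^ (α * μ / 2 - 1) *
    Real.exp (-μ * (γ / γbar) ^ (α / 2))

lemma aux_cov (α μ γbar c : ℝ) (hα : 0 < α) (hμ : 0 < μ) (hγbar : 0 < γbar) (hc : 0 < c) :
    ∫ γ in Ioc 0 c, alphaMuDensity α μ γbar γ
      = (1 / Real.Gamma μ) * ∫ t in (0:ℝ)..(μ * (c / γbar) ^ (α / 2)),
          t ^ (μ - 1) * Real.exp (-t) := by
  have hΓ : 0 < Real.Gamma μ := Real.Gamma_pos_of_pos hμ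
  set T : ℝ := μ * (c / γbar) ^ (α / 2) with hTdef
  have hT : 0 < T := by positivity
  set φ : ℝ → ℝ := fun γ => μ * (γ / γbar) ^ (α / 2) with hφdef
  set φ' : ℝ → ℝ := fun γ => μ * ((α / 2) * (γ / γbar) ^ (α / 2 - 1) * (1 / γbar)) with hφ'def
  have hderiv : ∀ x ∈ Ioo (0:ℝ) c, HasDerivWithinAt φ (φ' x) (Ioo 0 c) x := by
    intro x hx
    have hx0 : 0 < x := hx.1
    have h1 : HasDerivAt (fun γ : ℝ => γ / γbar) (1 / γbar) x := by
      simpa using (hasDerivAt_id x).div_const γbar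
    have h2 : HasDerivAt (fun γ : ℝ => (γ / γbar) ^ (α / 2))
        ((α / 2) * (x / γbar) ^ (α / 2 - 1) * (1 / γbar)) x := by
      have := h1.rpow_const (p := α / 2) (Or.inl (by positivity))
      simpa [mul_comm, mul_assoc] using this
    exact (h2.const_mul μ).hasDerivWithinAt
  have hinj : InjOn φ (Ioo 0 c) := by
    intro x hx y hy hxy
    have hx0 : 0 < x := hx.1
    have hy0 : 0 < y := hy.1
    have hne : α / 2 ≠ 0 := by positivity
    have h1 : (x / γbar) ^ (α / 2) = (y / γbar) ^ (α / 2) :=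
      mul_left_cancel₀ hμ.ne' hxy
    have h2 : x / γbar = y / γbar :=
      Real.rpow_left_injOn hne (by exact (by positivity : (0:ℝ) ≤ x / γbar))
        (by exact (by positivity : (0:ℝ) ≤ y / γbar)) h1
    field_simp at h2
    exact h2
  have himg : φ '' Ioo 0 c = Ioo 0 T := by
    ext t
    constructor
    · rintro ⟨x, hx, rfl⟩
      have hx0 : 0 < x := hx.1
      refine ⟨by positivity, ?_⟩
      have h1 : (x / γbar) ^ (α / 2) < (c / γbar) ^ (α / 2) :=
        Real.rpow_lt_rpow (by positivity) ((div_lt_div_iff_of_pos_right hγbar).mpr hx.2) (by positivity)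
      exact mul_lt_mul_of_pos_left h1 hμ
    · rintro ⟨ht0, htT⟩
      refine ⟨γbar * (t / μ) ^ (2 / α), ⟨by positivity, ?_⟩, ?_⟩
      · have h1 : t / μ < (c / γbar) ^ (α / 2) := by
          rw [div_lt_iff₀ hμ, mul_comm]; exact htT
        have h2 : (t / μ) ^ (2 / α) < ((c / γbar) ^ (α / 2)) ^ (2 / α) :=
          Real.rpow_lt_rpow (by positivity) h1 (by positivity)
        have h3 : ((c / γbar) ^ (α / 2)) ^ (2 / α) = c / γbar := by
          rw [← Real.rpow_mul (by positivity)]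
          rw [show α / 2 * (2 / α) = 1 by field_simp, Real.rpow_one]
        rw [h3] at h2
        calc γbar * (t / μ) ^ (2 / α) < γbar * (c / γbar) := by
              exact mul_lt_mul_of_pos_left h2 hγbar
          _ = c := by field_simp
      · show μ * ((γbar * (t / μ) ^ (2 / α)) / γbar) ^ (α / 2) = t
        rw [mul_div_cancel_left₀ _ hγbar.ne',
          ← Real.rpow_mul (by positivity),
          show 2 / α * (α / 2) = 1 by field_simp, Real.rpow_one]
        field_simp
  rw [integral_Ioc_eq_integral_Ioo, intervalIntegral.integral_of_le hT.le,
    integral_Ioc_eq_integral_Ioo, ← himg,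
    integral_image_eq_integral_abs_deriv_smul measurableSet_Ioo hderiv hinj,
    ← MeasureTheory.integral_const_mul]
  refine setIntegral_congr_fun measurableSet_Ioo ?_
  intro x hx
  have hx0 : 0 < x := hx.1
  have hu : 0 < x / γbar := by positivity
  have habs : |φ' x| = φ' x := abs_of_pos (by
    show 0 < μ * ((α / 2) * (x / γbar) ^ (α / 2 - 1) * (1 / γbar))
    positivity)
  simp only [hφdef, hφ'def, smul_eq_mul, habs]
  rw [abs_of_pos (by positivity : (0:ℝ) < μ * (α / 2 * (x / γbar) ^ (α / 2 - 1) * (1 / γbar)))]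
  show alphaMuDensity α μ γbar x
      = 1 / Real.Gamma μ * (μ * (α / 2 * (x / γbar) ^ (α / 2 - 1) * (1 / γbar)) *
        ((μ * (x / γbar) ^ (α / 2)) ^ (μ - 1) * Real.exp (-(μ * (x / γbar) ^ (α / 2)))))
  rw [alphaMuDensity, if_neg (not_le.mpr hx0)]
  set u := x / γbar with hu_def
  have e1 : (μ * u ^ (α / 2)) ^ (μ - 1) = μ ^ (μ - 1) * u ^ (α / 2 * (μ - 1)) := by
    rw [Real.mul_rpow hμ.le (Real.rpow_nonneg hu.le _), ← Real.rpow_mul hu.le]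
  have e3 : μ * μ ^ (μ - 1) = μ ^ μ := by
    nth_rewrite 1 [← Real.rpow_one μ]
    rw [← Real.rpow_add hμ]; norm_num
  have e4 : u ^ (α / 2 - 1) * u ^ (α / 2 * (μ - 1)) = u ^ (α * μ / 2 - 1) := by
    rw [← Real.rpow_add hu]; ring_nf
  have e5 : u ^ (α * μ / 2 - 1) = x ^ (α * μ / 2 - 1) / γbar ^ (α * μ / 2 - 1) := by
    rw [hu_def, Real.div_rpow hx0.le hγbar.le]
  have e6 : γbar ^ (α * μ / 2 - 1) = γbar ^ (α * μ / 2) / γbar := by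
    rw [Real.rpow_sub hγbar, Real.rpow_one]
  have hgb : (0:ℝ) < γbar ^ (α * μ / 2) := Real.rpow_pos_of_pos hγbar _
  have key : u ^ (α / 2 - 1) * u ^ (α / 2 * (μ - 1))
      = x ^ (α * μ / 2 - 1) * γbar / γbar ^ (α * μ / 2) := by
    rw [e4, e5, e6]; field_simp
  rw [e1, show Real.exp (-(μ * u ^ (α / 2))) = Real.exp (-μ * u ^ (α / 2)) by ring_nf]
  calc (α * μ ^ μ) / (2 * Real.Gamma μ * γbar ^ (α * μ / 2)) * x ^ (α * μ / 2 - 1) *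
        Real.exp (-μ * u ^ (α / 2))
      = μ ^ μ * (α / 2) * (x ^ (α * μ / 2 - 1) * γbar / γbar ^ (α * μ / 2)) *
        Real.exp (-μ * u ^ (α / 2)) / (Real.Gamma μ * γbar) := by
        field_simp
    _ = (μ * μ ^ (μ - 1)) * (α / 2) * (u ^ (α / 2 - 1) * u ^ (α / 2 * (μ - 1))) *
        Real.exp (-μ * u ^ (α / 2)) / (Real.Gamma μ * γbar) := by rw [e3, key]
    _ = 1 / Real.Gamma μ * (μ * (α / 2 * u ^ (α / 2 - 1) * (1 / γbar)) *
        (μ ^ (μ - 1) * u ^ (α / 2 * (μ - 1)) * Real.exp (-μ * u ^ (α / 2)))) := by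
        field_simp

theorem stmt_11 {Ω : Type*} [MeasurableSpace Ω] (P : Measure Ω) [IsProbabilityMeasure P]
    (α μ γbar : ℝ) (hα : 0 < α) (hμ : 0 < μ) (hγbar : 0 < γbar)
    (ω ρ τ : ℝ) (hω : 0 < ω) (hρ : 0 < ρ) (hτ : 0 < τ)
    (γth : ℝ) (hγth0 : 0 < γth) (hγth : γth < ω / ρ)
    (X : Ω → ℝ) (hX : Measurable X)
    (hdens : ∀ s : Set ℝ, MeasurableSet s →
      P (X ⁻¹' s) = ENNReal.ofReal (∫ γ in s, alphaMuDensity α μ γbar γ))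
    (Y : Ω → ℝ) (hY : ∀ a, Y a = ω * X a / (ρ * X a + τ)) :
    (P {a | Y a ≤ γth}).toReal =
      (1 / Real.Gamma μ) *
        ∫ t in (0 : ℝ)..(μ * (τ * γth / ((ω - ρ * γth) * γbar)) ^ (α / 2)),
          t ^ (μ - 1) * Real.exp (-t) := by
  have hωρ : 0 < ω - ρ * γth := by
    have := (lt_div_iff₀ hρ).mp hγth
    nlinarith
  set c : ℝ := τ * γth / (ω - ρ * γth) with hcdef
  have hc : 0 < c := by positivity
  have hfmeas : Measurable fun x : ℝ => ω * x / (ρ * x + τ) :=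
    (measurable_const.mul measurable_id).div
      ((measurable_const.mul measurable_id).add measurable_const)
  have hs_meas : MeasurableSet {x : ℝ | ω * x / (ρ * x + τ) ≤ γth} :=
    measurableSet_le hfmeas measurable_const
  have hset : {a | Y a ≤ γth} = X ⁻¹' {x | ω * x / (ρ * x + τ) ≤ γth} := by
    ext a; simp [hY a]
  have fnonneg : ∀ x, 0 ≤ alphaMuDensity α μ γbar x := by
    intro x; rw [alphaMuDensity]; split_ifs with h
    · exact le_rfl
    · push_neg at h
      have hΓ := Real.Gamma_pos_of_pos hμ
      positivity
  have hind : (fun x => Set.indicator {x : ℝ | ω * x / (ρ * x + τ) ≤ γth}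
      (alphaMuDensity α μ γbar) x)
      = fun x => Set.indicator (Ioc 0 c) (alphaMuDensity α μ γbar) x := by
    funext x
    by_cases hx : 0 < x
    · have hden : 0 < ρ * x + τ := by positivity
      have hiff : ω * x / (ρ * x + τ) ≤ γth ↔ x ∈ Ioc 0 c := by
        rw [div_le_iff₀ hden, Set.mem_Ioc, hcdef]
        constructor
        · intro h; exact ⟨hx, (le_div_iff₀ hωρ).mpr (by nlinarith)⟩
        · rintro ⟨-, h⟩; nlinarith [(le_div_iff₀ hωρ).mp h]
      simp only [Set.indicator_apply, Set.mem_setOf_eq, hiff]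
    · have h0 : alphaMuDensity α μ γbar x = 0 := if_pos (not_lt.mp hx)
      have hnot : x ∉ Ioc (0:ℝ) c := fun h => hx h.1
      simp [Set.indicator_apply, h0, hnot]
  have hint : (∫ γ in {x : ℝ | ω * x / (ρ * x + τ) ≤ γth}, alphaMuDensity α μ γbar γ)
      = ∫ γ in Ioc 0 c, alphaMuDensity α μ γbar γ := by
    rw [← MeasureTheory.integral_indicator hs_meas, ← MeasureTheory.integral_indicator measurableSet_Ioc]
    exact integral_congr_ae (Filter.Eventually.of_forall fun x => congrFun hind x)
  rw [hset, hdens _ hs_meas, hint, ENNReal.toReal_ofReal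
    (integral_nonneg fun x => fnonneg x), aux_cov α μ γbar c hα hμ hγbar hc,
    show c / γbar = τ * γth / ((ω - ρ * γth) * γbar) from div_div _ _ _]
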